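/- Let g(t) := t/(1−t²) + t/(2(1−t²/4)) − 4·artanh(t) − 4·artanh(t/2) for t ∈ (0,1). Then g(t) < 0 for every t with 0 < t ≤ √(9−√33)/2. -/

import Mathlib

/-- The inverse hyperbolic tangent, `artanh x = ½ log((1+x)/(1-x))`. -/
noncomputable def artanh (x : ℝ) : ℝ := (1 / 2) * Real.log ((1 + x) / (1 - x))

lemma artanh_ge {x : ℝ} (h0 : 0 ≤ x) (h1 : x < 1) : x + x ^ 3 / 3 ≤ artanh x := by
  set f : ℝ → ℝ := fun y => (1/2) * (Real.log (1 + y) - Real.log (1 - y)) - y - y ^ 3 / 3 with hf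
  have key : ∀ y ∈ Set.Ioo (0:ℝ) 1, HasDerivAt f
      ((1/2) * (1/(1+y) - (-1)/(1-y)) - 1 - 3 * y ^ 2 / 3) y := by
    intro y hy
    have hy1 : (1:ℝ) + y ≠ 0 := by nlinarith [hy.1, hy.2]
    have hy2 : (1:ℝ) - y ≠ 0 := by nlinarith [hy.1, hy.2]
    have d1 : HasDerivAt (fun y : ℝ => Real.log (1 + y)) (1/(1+y)) y := by
      simpa using (((hasDerivAt_id y).const_add 1).log hy1)
    have d2 : HasDerivAt (fun y : ℝ => Real.log (1 - y)) ((-1)/(1-y)) y := by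
      simpa using (((hasDerivAt_id y).const_sub 1).log hy2)
    have d3 : HasDerivAt (fun y : ℝ => y ^ 3 / 3) (3 * y ^ 2 / 3) y :=
      (hasDerivAt_pow 3 y).div_const 3
    have h := (((d1.sub d2).const_mul ((1:ℝ)/2)).sub (hasDerivAt_id y)).sub d3
    refine HasDerivAt.congr_of_eventuallyEq h (Filter.Eventually.of_forall fun z => ?_)
    simp [hf]
  have mono : MonotoneOn f (Set.Ico (0:ℝ) 1) := by
    apply monotoneOn_of_hasDerivWithinAt_nonneg (convex_Ico 0 1)
      (f' := fun y => (1/2) * (1/(1+y) - (-1)/(1-y)) - 1 - 3 * y ^ 2 / 3)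
    · -- continuity
      apply ContinuousOn.sub
      apply ContinuousOn.sub
      · apply ContinuousOn.mul continuousOn_const
        apply ContinuousOn.sub
        · exact (Real.continuousOn_log.comp (by fun_prop) (fun y hy => by
            simp only [Set.mem_Ico] at hy; simp; nlinarith [hy.1, hy.2]))
        · exact (Real.continuousOn_log.comp (by fun_prop) (fun y hy => by
            simp only [Set.mem_Ico] at hy; simp; nlinarith [hy.1, hy.2]))
      · exact continuousOn_id
      · fun_prop
    · intro y hy
      rw [interior_Ico] at hy
      exact (key y hy).hasDerivWithinAt
    · intro y hy
      rw [interior_Ico] at hy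
      obtain ⟨hy0, hy1'⟩ := hy
      have h1p : (0:ℝ) < 1 + y := by linarith
      have h1m : (0:ℝ) < 1 - y := by linarith
      have : (1/2) * (1/(1+y) - (-1)/(1-y)) - 1 - 3 * y ^ 2 / 3
          = y ^ 4 / ((1+y) * (1-y)) := by
        field_simp
        ring
      rw [this]
      positivity
  have h00 : f 0 ≤ f x := by
    apply mono (by simp) (by simp [h0, h1]) h0
  have hfx : artanh x = (1/2) * (Real.log (1 + x) - Real.log (1 - x)) := by
    unfold artanh
    rw [Real.log_div (by linarith) (by linarith)]
  simp only [hf] at h00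
  simp at h00
  rw [hfx]
  linarith


/-- The function `g(t) = t/(1−t²) + t/(2(1−t²/4)) − 4 artanh t − 4 artanh(t/2)` is negative
for `0 < t ≤ √(9−√33)/2`. -/
theorem g_neg_of_le (t : ℝ) (ht0 : 0 < t) (ht : t ≤ Real.sqrt (9 - Real.sqrt 33) / 2) :
    t / (1 - t ^ 2) + t / (2 * (1 - t ^ 2 / 4)) - 4 * artanh t - 4 * artanh (t / 2) < 0 := by
  have hw : Real.sqrt 33 ^ 2 = 33 := Real.sq_sqrt (by norm_num)
  have hw5 : (5:ℝ) < Real.sqrt 33 := by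
    nlinarith [Real.sqrt_nonneg 33, hw]
  have hw6 : Real.sqrt 33 < 6 := by
    nlinarith [Real.sqrt_nonneg 33, hw]
  have h9 : (0:ℝ) ≤ 9 - Real.sqrt 33 := by linarith
  have hs : t ^ 2 ≤ (9 - Real.sqrt 33) / 4 := by
    have h2 : Real.sqrt (9 - Real.sqrt 33) ^ 2 = 9 - Real.sqrt 33 := Real.sq_sqrt h9
    nlinarith [Real.sqrt_nonneg (9 - Real.sqrt 33), ht, ht0]
  have ht1 : t < 1 := by nlinarith
  have hd1 : (0:ℝ) < 1 - t ^ 2 := by nlinarith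
  have hd2 : (0:ℝ) < 1 - t ^ 2 / 4 := by nlinarith
  -- artanh lower bounds
  have hA : t + t ^ 3 / 3 ≤ artanh t := artanh_ge ht0.le ht1
  have hB : t / 2 + (t / 2) ^ 3 / 3 ≤ artanh (t / 2) :=
    artanh_ge (by linarith) (by linarith)
  -- polynomial fact: s³ − s² − 14 s + 12 > 0 for s = t²
  have hp : 0 < (t ^ 2) ^ 3 - (t ^ 2) ^ 2 - 14 * t ^ 2 + 12 := by
    nlinarith [hs, hw5, hw, sq_nonneg (t ^ 2), sq_nonneg t, ht0,
      mul_nonneg (sq_nonneg t) (sq_nonneg t)]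
  have key : t / (1 - t ^ 2) + t / (2 * (1 - t ^ 2 / 4)) < 6 * t + (3/2) * t ^ 3 := by
    rw [div_add_div _ _ (by linarith) (by positivity), div_lt_iff₀ (by positivity)]
    nlinarith [mul_pos ht0 hp]
  nlinarith [hA, hB, key]
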